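/- Let τ be a dual-criticality task system and let 0 ≤ t1 < t2 be reals, and set t := t2 − t1. If the existing-test condition E(t) ≤ t holds (the schedulability condition of Proposition 3), then the improved-test condition I(t1,t2) ≤ t2 holds (the schedulability condition of Theorem 2). Consequently, if E(t) ≤ t for all t ≥ 0, then I(t1,t2) ≤ t2 for all 0 ≤ t1 < t2: the improved demand-based test dominates the existing demand-based test. (Theorem 3 of the paper.) -/

import Mathlib

open scoped Classical
open Finset

namespace MC

/-- `MOD t T = t - ⌊t/T⌋·T`. -/
noncomputable def MOD (t T : ℝ) : ℝ := t - (⌊t / T⌋ : ℝ) * T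

/-- A dual-criticality sporadic task: minimum separation `T > 0`, low-criticality WCET
`CL` and high-criticality WCET `CH` with `0 < CL ≤ CH`, real deadline `D` and tightened
deadline `DL` with `CL ≤ DL ≤ D ≤ T`. -/
structure Task where
  T : ℝ
  D : ℝ
  DL : ℝ
  CL : ℝ
  CH : ℝ
  hT : 0 < T
  hCL : 0 < CL
  hCLCH : CL ≤ CH
  hCLDL : CL ≤ DL
  hDLD : DL ≤ D
  hDT : D ≤ T

/-- Low-criticality demand bound function `dbf^L(t)`. -/
noncomputable def dbfL (τ : Task) (t : ℝ) : ℝ :=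
  max 0 (((⌊(t - τ.DL) / τ.T⌋ : ℝ) + 1) * τ.CL)

/-- High-criticality demand bound function `dbf^H(t)`. -/
noncomputable def dbfH (τ : Task) (t : ℝ) : ℝ :=
  max 0 (((⌊(t - τ.D) / τ.T⌋ : ℝ) + 1) * τ.CH)

/-- Two-parameter low-criticality demand bound `dbf^L(t1, t2)`. -/
noncomputable def dbfL2 (τ : Task) (t1 t2 : ℝ) : ℝ :=
  max 0 ((⌊(t2 - τ.D) / τ.T⌋ : ℝ) - (⌊(t2 - t1 - τ.D) / τ.T⌋ : ℝ) - 1) * τ.CL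

/-- Unnecessary-job demand bound `dbf^{UN}(t1, t2)`. -/
noncomputable def dbfUN (τ : Task) (t1 t2 : ℝ) : ℝ :=
  if MOD t1 τ.T < τ.DL ∧ (⌊t1 / τ.T⌋ : ℝ) * τ.T + τ.DL ≤ t2 then
    min τ.CL (MOD t1 τ.T)
  else 0

/-- Maximum carry-over execution `CO(t)` pending at the start of an interval of length `t`. -/
noncomputable def CO (τ : Task) (t : ℝ) : ℝ :=
  min τ.CL (MOD t τ.T - (τ.D - τ.DL))

/-- A release set for a task: a finite set of nonnegative reals, any two distinct
elements of which differ by at least the minimum separation `T`. -/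
def ReleaseSet (τ : Task) (R : Finset ℝ) : Prop :=
  (∀ x ∈ R, 0 ≤ x) ∧ ∀ x ∈ R, ∀ y ∈ R, x ≠ y → τ.T ≤ |x - y|

/-- Case 1: `t2 - t1 ≤ D - D^L`; no job of the task executes after the switch. -/
def case1 (τ : Task) (t1 t2 : ℝ) : Prop := t2 - t1 ≤ τ.D - τ.DL

/-- Case 2: the carry-over job contributes demand after the switch. -/
def case2 (τ : Task) (t1 t2 : ℝ) : Prop :=
  τ.D - τ.DL < MOD (t2 - t1) τ.T ∧ MOD (t2 - t1) τ.T < τ.D ∧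
    (⌊(t2 - t1) / τ.T⌋ : ℝ) * τ.T + τ.D ≤ t2

/-- Case 3: neither case 1 nor case 2. -/
def case3 (τ : Task) (t1 t2 : ℝ) : Prop := ¬ case1 τ t1 t2 ∧ ¬ case2 τ t1 t2

/-- Set `S(t)` of HC tasks whose carry-over job contributes demand in an interval of
length `t` (existing test). -/
noncomputable def Sset {n : ℕ} (τ : Fin n → Task) (hc : Fin n → Bool) (t : ℝ) :
    Finset (Fin n) :=
  univ.filter fun i =>
    hc i = true ∧ (τ i).D - (τ i).DL < MOD t (τ i).T ∧ MOD t (τ i).T < (τ i).D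

/-- The existing-test bound `E(t)` (Proposition 3, from Ekberg and Yi). -/
noncomputable def Etest {n : ℕ} (τ : Fin n → Task) (hc : Fin n → Bool) (t : ℝ) : ℝ :=
  ∑ i ∈ univ.filter (fun i => hc i = true), dbfH (τ i) t +
    ∑ i ∈ Sset τ hc t, (((τ i).CH - (τ i).CL) + CO (τ i) t)

/-- `U`: the set of LC tasks together with HC tasks in case 1. -/
noncomputable def Uset {n : ℕ} (τ : Fin n → Task) (hc : Fin n → Bool) (t1 t2 : ℝ) :
    Finset (Fin n) :=
  univ.filter fun i => hc i = false ∨ case1 (τ i) t1 t2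

/-- HC tasks in case 2. -/
noncomputable def H2set {n : ℕ} (τ : Fin n → Task) (hc : Fin n → Bool) (t1 t2 : ℝ) :
    Finset (Fin n) :=
  univ.filter fun i => hc i = true ∧ case2 (τ i) t1 t2

/-- HC tasks in case 3. -/
noncomputable def H3set {n : ℕ} (τ : Fin n → Task) (hc : Fin n → Bool) (t1 t2 : ℝ) :
    Finset (Fin n) :=
  univ.filter fun i => hc i = true ∧ case3 (τ i) t1 t2

/-- The new-test bound `N(t1,t2)` of Theorem 1. -/
noncomputable def Ntest {n : ℕ} (τ : Fin n → Task) (hc : Fin n → Bool) (t1 t2 : ℝ) : ℝ :=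
  ∑ i ∈ Uset τ hc t1 t2, (dbfL (τ i) t1 + dbfUN (τ i) t1 t2) +
    ∑ i ∈ H2set τ hc t1 t2, (dbfL2 (τ i) t1 t2 + dbfH (τ i) (t2 - t1) + (τ i).CH) +
    ∑ i ∈ H3set τ hc t1 t2, (dbfL2 (τ i) t1 t2 + dbfH (τ i) (t2 - t1) + (τ i).CL)

/-- Collective bound `dbf_{UN}(t1,t2)` on the demand of all unnecessary jobs (Lemma 5). -/
noncomputable def dbfUNtot {n : ℕ} (τ : Fin n → Task) (hc : Fin n → Bool) (t1 t2 : ℝ) : ℝ :=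
  if h : (Uset τ hc t1 t2).Nonempty then
    min ((Uset τ hc t1 t2).sup' h fun i => (τ i).DL)
      (∑ i ∈ Uset τ hc t1 t2, dbfUN (τ i) t1 t2)
  else 0

/-- `dbf_{L1}(t1,t2)` (Lemma 7). -/
noncomputable def dbfL1tot {n : ℕ} (τ : Fin n → Task) (hc : Fin n → Bool) (t1 t2 : ℝ) : ℝ :=
  dbfUNtot τ hc t1 t2 + ∑ i ∈ Uset τ hc t1 t2, dbfL (τ i) t1

/-- `dbf_{L2}(t1,t2)` (Lemma 8). -/
noncomputable def dbfL2tot {n : ℕ} (τ : Fin n → Task) (hc : Fin n → Bool) (t1 t2 : ℝ) : ℝ :=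
  ∑ i ∈ H2set τ hc t1 t2, (dbfL2 (τ i) t1 t2 + (τ i).CL - CO (τ i) (t2 - t1))

/-- `dbf_{L3}(t1,t2)` (Lemma 9). -/
noncomputable def dbfL3tot {n : ℕ} (τ : Fin n → Task) (hc : Fin n → Bool) (t1 t2 : ℝ) : ℝ :=
  ∑ i ∈ H3set τ hc t1 t2, (dbfL2 (τ i) t1 t2 + (τ i).CL)

/-- The improved-test bound `I(t1,t2)` of Theorem 2. -/
noncomputable def Itest {n : ℕ} (τ : Fin n → Task) (hc : Fin n → Bool) (t1 t2 : ℝ) : ℝ :=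
  min t1 (dbfL1tot τ hc t1 t2 + dbfL2tot τ hc t1 t2 + dbfL3tot τ hc t1 t2) +
    (∑ i ∈ H2set τ hc t1 t2, dbfH (τ i) (t2 - t1) +
      ∑ i ∈ H3set τ hc t1 t2, dbfH (τ i) (t2 - t1)) +
    ∑ i ∈ H2set τ hc t1 t2, (CO (τ i) (t2 - t1) + (τ i).CH - (τ i).CL)


/-- Theorem 3 of the paper. The improved demand-based test dominates
the existing demand-based test: if `E(t2 - t1) ≤ t2 - t1` then `I(t1,t2) ≤ t2`;
consequently, if `E(t) ≤ t` for all `t ≥ 0`, then `I(t1,t2) ≤ t2` for all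
`0 ≤ t1 < t2`. -/
theorem improved_dominates_existing {n : ℕ} (τ : Fin n → Task) (hc : Fin n → Bool)
    (hLC : ∀ i, hc i = false → (τ i).CL = (τ i).CH ∧ (τ i).DL = (τ i).D) :
    (∀ t1 t2 : ℝ, 0 ≤ t1 → t1 < t2 →
        Etest τ hc (t2 - t1) ≤ t2 - t1 → Itest τ hc t1 t2 ≤ t2) ∧
      ((∀ t : ℝ, 0 ≤ t → Etest τ hc t ≤ t) →
        ∀ t1 t2 : ℝ, 0 ≤ t1 → t1 < t2 → Itest τ hc t1 t2 ≤ t2) := by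
  have main : ∀ t1 t2 : ℝ, 0 ≤ t1 → t1 < t2 →
      Etest τ hc (t2 - t1) ≤ t2 - t1 → Itest τ hc t1 t2 ≤ t2 := by
    intro t1 t2 ht1 h12 hE
    set t := t2 - t1 with htdef
    have hdbfHnn : ∀ i : Fin n, (0:ℝ) ≤ dbfH (τ i) t := fun i => le_max_left _ _
    have hdisj : Disjoint (H2set τ hc t1 t2) (H3set τ hc t1 t2) := by
      simp only [Finset.disjoint_left, H2set, H3set, mem_filter, mem_univ, true_and]
      rintro i ⟨_, h2⟩ ⟨_, h3⟩
      exact h3.2 h2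
    have hsubH : H2set τ hc t1 t2 ∪ H3set τ hc t1 t2 ⊆ univ.filter (fun i => hc i = true) := by
      intro i hi
      simp only [H2set, H3set, mem_union, mem_filter, mem_univ, true_and] at hi ⊢
      rcases hi with h | h <;> exact h.1
    have hH : ∑ i ∈ H2set τ hc t1 t2, dbfH (τ i) t + ∑ i ∈ H3set τ hc t1 t2, dbfH (τ i) t
        ≤ ∑ i ∈ univ.filter (fun i => hc i = true), dbfH (τ i) t := by
      rw [← Finset.sum_union hdisj]
      exact Finset.sum_le_sum_of_subset_of_nonneg hsubH (fun i _ _ => hdbfHnn i)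
    have hsubS : H2set τ hc t1 t2 ⊆ Sset τ hc t := by
      intro i hi
      simp only [H2set, mem_filter, mem_univ, true_and] at hi
      simp only [case2] at hi
      simp only [Sset, mem_filter, mem_univ, true_and]
      exact ⟨hi.1, hi.2.1, hi.2.2.1⟩
    have hSnn : ∀ i ∈ Sset τ hc t, (0:ℝ) ≤ ((τ i).CH - (τ i).CL) + CO (τ i) t := by
      intro i hi
      simp only [Sset, mem_filter, mem_univ, true_and] at hi
      have h1 : (0:ℝ) ≤ (τ i).CH - (τ i).CL := sub_nonneg.2 (τ i).hCLCH
      have h2 : (0:ℝ) ≤ CO (τ i) t := by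
        unfold CO
        exact le_min (τ i).hCL.le (by linarith [hi.2.1])
      linarith
    have hS : ∑ i ∈ H2set τ hc t1 t2, (CO (τ i) t + (τ i).CH - (τ i).CL)
        ≤ ∑ i ∈ Sset τ hc t, (((τ i).CH - (τ i).CL) + CO (τ i) t) := by
      calc ∑ i ∈ H2set τ hc t1 t2, (CO (τ i) t + (τ i).CH - (τ i).CL)
          = ∑ i ∈ H2set τ hc t1 t2, (((τ i).CH - (τ i).CL) + CO (τ i) t) := by
            apply Finset.sum_congr rfl; intro i _; ring
        _ ≤ _ := Finset.sum_le_sum_of_subset_of_nonneg hsubS (fun i hi _ => hSnn i hi)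
    have hmin : min t1 (dbfL1tot τ hc t1 t2 + dbfL2tot τ hc t1 t2 + dbfL3tot τ hc t1 t2) ≤ t1 :=
      min_le_left _ _
    unfold Itest
    unfold Etest at hE
    linarith
  exact ⟨main, fun hAll t1 t2 h1 h2 => main t1 t2 h1 h2 (hAll _ (by linarith))⟩

end MC
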